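/- Suppose X_1,…,X_n are bounded random variables with sup X_i − inf X_i ≤ B_i, and let K be a set of probability measures whose upper expectation Ē satisfies the factorization property Ē[∏_{i=1}^n f_i(X_i)] ≤ ∏_{i=1}^n Ē[f_i(X_i)] for all bounded nonnegative functions f_i. Then for γ_n = Σ B_i² > 0 and any ε > 0, the upper probability satisfies P̄(Σ_{i=1}^n (X_i − Ē[X_i]) ≥ ε) ≤ exp(−2ε²/γ_n). -/

import Mathlib

open MeasureTheory Real Set



lemma key_ineq (p : ℝ) (hp0 : 0 ≤ p) (hp1 : p ≤ 1) (h : ℝ) :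
    1 - p + p * Real.exp h ≤ Real.exp (p * h + h ^ 2 / 8) := by
  have hD : ∀ s : ℝ, 0 < 1 - p + p * Real.exp s := by
    intro s
    rcases hp1.lt_or_eq with h1 | h1
    · have := mul_nonneg hp0 (Real.exp_pos s).le
      linarith
    · subst h1
      simpa using Real.exp_pos s
  set F : ℝ → ℝ := fun s => p * Real.exp s / (1 - p + p * Real.exp s) with hFdef
  have hDden : ∀ s : ℝ, HasDerivAt (fun u : ℝ => 1 - p + p * Real.exp u) (p * Real.exp s) s := by
    intro s
    simpa using ((Real.hasDerivAt_exp s).const_mul p).const_add (1 - p)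
  have hφ : ∀ s : ℝ, HasDerivAt (fun u : ℝ => Real.log (1 - p + p * Real.exp u)) (F s) s := by
    intro s
    exact (hDden s).log (hD s).ne'
  have hF : ∀ s : ℝ, HasDerivAt F
      ((p * Real.exp s * (1 - p + p * Real.exp s) - p * Real.exp s * (p * Real.exp s)) /
        (1 - p + p * Real.exp s) ^ 2) s := by
    intro s
    exact ((Real.hasDerivAt_exp s).const_mul p).div (hDden s) (hD s).ne'
  have hFbound : ∀ s : ℝ,
      |((p * Real.exp s * (1 - p + p * Real.exp s) - p * Real.exp s * (p * Real.exp s)) /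
        (1 - p + p * Real.exp s) ^ 2)| ≤ 1 / 4 := by
    intro s
    have hDs := hD s
    have he := Real.exp_pos s
    rw [abs_div, abs_of_nonneg (by nlinarith [mul_nonneg (mul_nonneg hp0 he.le) (sub_nonneg.2 hp1)] : (0:ℝ) ≤ p * Real.exp s * (1 - p + p * Real.exp s) - p * Real.exp s * (p * Real.exp s)), abs_of_nonneg (by positivity : (0:ℝ) ≤ (1 - p + p * Real.exp s) ^ 2)]
    rw [div_le_iff₀ (by positivity)]
    nlinarith [sq_nonneg (1 - p - p * Real.exp s)]
  have hF0 : F 0 = p := by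
    simp [hFdef]
  -- |F s - p| ≤ |s| / 4
  have hB : ∀ s : ℝ, |F s - p| ≤ |s| / 4 := by
    intro s
    rcases le_or_gt 0 s with hs | hs
    · have := norm_image_sub_le_of_norm_deriv_le_segment'
        (f := F) (a := 0) (b := s) (C := 1/4)
        (fun x _ => (hF x).hasDerivWithinAt) (fun x _ => hFbound x) s (by constructor <;> simp [hs])
      rw [hF0] at this
      rw [abs_of_nonneg hs]
      simp [Real.norm_eq_abs, div_mul_eq_mul_div, mul_comm] at this
      linarith
    · have := norm_image_sub_le_of_norm_deriv_le_segment'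
        (f := F) (a := s) (b := 0) (C := 1/4)
        (fun x _ => (hF x).hasDerivWithinAt) (fun x _ => hFbound x) 0 (by constructor <;> simp [hs.le])
      rw [hF0] at this
      rw [abs_of_neg hs]
      rw [Real.norm_eq_abs, abs_sub_comm] at this
      linarith
  set g : ℝ → ℝ := fun s => s ^ 2 / 8 - (Real.log (1 - p + p * Real.exp s) - p * s) with hgdef
  have hg : ∀ s : ℝ, HasDerivAt g (s / 4 - (F s - p)) s := by
    intro s
    have h1 : HasDerivAt (fun u : ℝ => u ^ 2 / 8) (s / 4) s := by
      have := (hasDerivAt_pow 2 s).div_const 8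
      refine this.congr_deriv ?_
      push_cast
      ring
    have h2 : HasDerivAt (fun u : ℝ => p * u) p s := by
      simpa using (hasDerivAt_id s).const_mul p
    exact h1.sub ((hφ s).sub h2)
  have hgdiff : Differentiable ℝ g := fun s => (hg s).differentiableAt
  have hgderiv : ∀ s : ℝ, deriv g s = s / 4 - (F s - p) := fun s => (hg s).deriv
  have hg0 : g 0 = 0 := by simp [hgdef]
  have hgh : 0 ≤ g h := by
    rcases le_or_gt 0 h with hh | hh
    · have hmono : MonotoneOn g (Icc 0 h) := by
        apply monotoneOn_of_deriv_nonneg (convex_Icc 0 h) hgdiff.continuous.continuousOn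
          hgdiff.differentiableOn
        intro x hx
        rw [interior_Icc] at hx
        rw [hgderiv x]
        have := hB x
        rw [abs_of_nonneg hx.1.le] at this
        have := abs_le.1 this
        linarith [this.2]
      have := hmono (left_mem_Icc.2 hh) (right_mem_Icc.2 hh) hh
      rw [hg0] at this
      exact this
    · have hanti : AntitoneOn g (Icc h 0) := by
        apply antitoneOn_of_deriv_nonpos (convex_Icc h 0) hgdiff.continuous.continuousOn
          hgdiff.differentiableOn
        intro x hx
        rw [interior_Icc] at hx
        rw [hgderiv x]
        have := hB x
        rw [abs_of_neg hx.2] at this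
        have := abs_le.1 this
        linarith [this.1]
      have := hanti (left_mem_Icc.2 hh.le) (right_mem_Icc.2 hh.le) hh.le
      rw [hg0] at this
      exact this
  have hlog : Real.log (1 - p + p * Real.exp h) ≤ p * h + h ^ 2 / 8 := by
    have : Real.log (1 - p + p * Real.exp h) - p * h ≤ h ^ 2 / 8 := by
      simp only [hgdef] at hgh
      linarith
    linarith
  calc 1 - p + p * Real.exp h = Real.exp (Real.log (1 - p + p * Real.exp h)) :=
        (Real.exp_log (hD h)).symm
    _ ≤ Real.exp (p * h + h ^ 2 / 8) := Real.exp_le_exp.2 hlog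



lemma integrable_of_bounds {Ω : Type*} [MeasurableSpace Ω] (P : Measure Ω) [IsFiniteMeasure P]
    {g : Ω → ℝ} (hg : Measurable g) {lo hi : ℝ} (h1 : ∀ ω, lo ≤ g ω) (h2 : ∀ ω, g ω ≤ hi) :
    Integrable g P := by
  apply Integrable.mono' (integrable_const (max |lo| |hi|)) hg.aestronglyMeasurable
  filter_upwards with ω
  rw [Real.norm_eq_abs, abs_le]
  constructor
  · have : -(max |lo| |hi|) ≤ -|lo| := neg_le_neg (le_max_left _ _)
    linarith [neg_abs_le lo, h1 ω]
  · linarith [le_abs_self hi, h2 ω, le_max_right (|lo|) (|hi|)]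

lemma hoeffding_lem {Ω : Type*} [MeasurableSpace Ω] (P : Measure Ω) [IsProbabilityMeasure P]
    (Y : Ω → ℝ) (hY : Measurable Y) (a B t : ℝ) (ht : 0 ≤ t) (hB : 0 ≤ B)
    (hlo : ∀ ω, a ≤ Y ω) (hhi : ∀ ω, Y ω ≤ a + B) :
    ∫ ω, Real.exp (t * Y ω) ∂P ≤ Real.exp (t * (∫ ω, Y ω ∂P) + t ^ 2 * B ^ 2 / 8) := by
  have hYi : Integrable Y P := integrable_of_bounds P hY hlo hhi
  have hEmeas : Measurable fun ω => Real.exp (t * Y ω) :=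
    Real.measurable_exp.comp (hY.const_mul t)
  have hEi : Integrable (fun ω => Real.exp (t * Y ω)) P := by
    apply integrable_of_bounds P hEmeas (lo := 0) (hi := Real.exp (t * (a + B)))
    · exact fun ω => (Real.exp_pos _).le
    · exact fun ω => Real.exp_le_exp.2 (mul_le_mul_of_nonneg_left (hhi ω) ht)
  rcases hB.eq_or_lt with hB0 | hB0
  · have hYa : ∀ ω, Y ω = a := fun ω => le_antisymm (by have := hhi ω; rw [← hB0] at this; linarith) (hlo ω)
    have h1 : ∫ ω, Real.exp (t * Y ω) ∂P = Real.exp (t * a) := by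
      simp only [hYa]
      simp
    have h2 : ∫ ω, Y ω ∂P = a := by simp only [hYa]; simp
    rw [h1, h2, ← hB0]
    apply Real.exp_le_exp.2
    nlinarith
  · set m := ∫ ω, Y ω ∂P with hm
    have hm_lo : a ≤ m := by
      have := integral_mono (integrable_const a) hYi hlo
      simpa using this
    have hm_hi : m ≤ a + B := by
      have := integral_mono hYi (integrable_const (a + B)) hhi
      simpa using this
    set c1 : ℝ := (Real.exp (t * (a + B)) - Real.exp (t * a)) / B with hc1
    set c0 : ℝ := ((a + B) * Real.exp (t * a) - a * Real.exp (t * (a + B))) / B with hc0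
    have hpt : ∀ ω, Real.exp (t * Y ω) ≤ c0 + c1 * Y ω := by
      intro ω
      have hw1 : (0:ℝ) ≤ (a + B - Y ω) / B := div_nonneg (by linarith [hhi ω]) hB0.le
      have hw2 : (0:ℝ) ≤ (Y ω - a) / B := div_nonneg (by linarith [hlo ω]) hB0.le
      have hsum : (a + B - Y ω) / B + (Y ω - a) / B = 1 := by field_simp; ring
      have hc := convexOn_exp.2 (Set.mem_univ (t * a)) (Set.mem_univ (t * (a + B))) hw1 hw2 hsum
      have hpoint : ((a + B - Y ω) / B) • (t * a) + ((Y ω - a) / B) • (t * (a + B)) = t * Y ω := by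
        simp only [smul_eq_mul]
        field_simp
        ring
      rw [hpoint] at hc
      refine hc.trans (le_of_eq ?_)
      simp only [smul_eq_mul, hc0, hc1]
      field_simp
      ring
    have hrhs_int : Integrable (fun ω => c0 + c1 * Y ω) P :=
      (integrable_const c0).add (hYi.const_mul c1)
    have hint : ∫ ω, Real.exp (t * Y ω) ∂P ≤ c0 + c1 * m := by
      calc ∫ ω, Real.exp (t * Y ω) ∂P ≤ ∫ ω, (c0 + c1 * Y ω) ∂P := integral_mono hEi hrhs_int hpt
        _ = c0 + c1 * m := by
            rw [integral_add (integrable_const c0) (hYi.const_mul c1), integral_const,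
              integral_const_mul]
            simp [hm]
    refine hint.trans ?_
    set p := (m - a) / B with hp
    have hp0 : 0 ≤ p := div_nonneg (by linarith) hB0.le
    have hp1 : p ≤ 1 := (div_le_one hB0).2 (by linarith)
    have hkey := key_ineq p hp0 hp1 (t * B)
    have heq : c0 + c1 * m = Real.exp (t * a) * (1 - p + p * Real.exp (t * B)) := by
      have hexp : Real.exp (t * (a + B)) = Real.exp (t * a) * Real.exp (t * B) := by
        rw [← Real.exp_add]; ring_nf
      rw [hc0, hc1, hp, hexp]
      field_simp
      ring
    have heq2 : Real.exp (t * m + t ^ 2 * B ^ 2 / 8) =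
        Real.exp (t * a) * Real.exp (p * (t * B) + (t * B) ^ 2 / 8) := by
      rw [← Real.exp_add]
      congr 1
      have hpB : p * B = m - a := by rw [hp]; field_simp
      have : p * (t * B) = t * (m - a) := by
        rw [show p * (t * B) = t * (p * B) by ring, hpB]
      rw [this]
      ring
    rw [heq, heq2]
    exact mul_le_mul_of_nonneg_left hkey (Real.exp_pos _).le


lemma real_biSup_le {ι : Type*} {s : Set ι} {g : ι → ℝ} {M : ℝ} (hM0 : 0 ≤ M)
    (h : ∀ i ∈ s, g i ≤ M) : (⨆ i ∈ s, g i) ≤ M :=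
  Real.iSup_le (fun i => Real.iSup_le (fun hi => h i hi) hM0) hM0

lemma le_real_biSup {ι : Type*} {s : Set ι} {g : ι → ℝ} {M : ℝ}
    (h : ∀ i ∈ s, g i ≤ M) {i : ι} (hi : i ∈ s) : g i ≤ ⨆ j ∈ s, g j := by
  have hbdd : BddAbove (Set.range fun j => ⨆ _ : j ∈ s, g j) :=
    ⟨max M 0, Set.forall_mem_range.2 fun j =>
      Real.iSup_le (fun hj => le_max_of_le_left (h j hj)) (le_max_right _ _)⟩
  calc g i = ⨆ _ : i ∈ s, g i := (ciSup_pos (f := fun _ => g i) hi).symm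
    _ ≤ ⨆ j ∈ s, g j := le_ciSup hbdd i







/-- Hoeffding-type inequality for upper expectations: if bounded variables `X_1, …, X_n`
(with range of `X_i` of length at most `B_i`) satisfy the factorization property
`Ē[∏ f_i(X_i)] ≤ ∏ Ē[f_i(X_i)]` for bounded nonnegative `f_i`, then for `γ_n = Σ B_i² > 0`
and `ε > 0`, `P̄(Σ (X_i - Ē[X_i]) ≥ ε) ≤ exp (-2ε²/γ_n)`. -/
theorem upper_hoeffding {Ω : Type*} [MeasurableSpace Ω]
    (K : Set (Measure Ω)) (hK : K.Nonempty) (hKp : ∀ P ∈ K, IsProbabilityMeasure P)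
    (n : ℕ) (hn : 0 < n) (X : ℕ → Ω → ℝ) (hmeas : ∀ i, Measurable (X i))
    (B : ℕ → ℝ)
    (hrange : ∀ i ∈ Finset.Icc 1 n, ∀ ω ω', X i ω - X i ω' ≤ B i)
    (hfact : ∀ f : ℕ → ℝ → ℝ,
      (∀ i x, 0 ≤ f i x) → (∀ i, ∃ C, ∀ x, f i x ≤ C) → (∀ i, Measurable (f i)) →
      (⨆ P ∈ K, ∫ ω, ∏ i ∈ Finset.Icc 1 n, f i (X i ω) ∂P) ≤
        ∏ i ∈ Finset.Icc 1 n, ⨆ P ∈ K, ∫ ω, f i (X i ω) ∂P)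
    (γ : ℝ) (hγ : γ = ∑ i ∈ Finset.Icc 1 n, (B i) ^ 2) (hγpos : 0 < γ)
    (ε : ℝ) (hε : 0 < ε) :
    (⨆ P ∈ K,
        (P {ω | ε ≤ ∑ i ∈ Finset.Icc 1 n, (X i ω - ⨆ Q ∈ K, ∫ ω', X i ω' ∂Q)}).toReal) ≤
      Real.exp (-2 * ε ^ 2 / γ) := by
  classical
  obtain ⟨P₀, hP₀⟩ := hK
  haveI := hKp P₀ hP₀
  have hΩ : Nonempty Ω := by
    by_contra hne
    rw [not_nonempty_iff] at hne
    have h1 : P₀ Set.univ = 1 := measure_univ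
    rw [Set.univ_eq_empty_iff.2 hne] at h1
    simp at h1
  haveI := hΩ
  have ω₀ : Ω := Classical.arbitrary Ω
  set μ : ℕ → ℝ := fun i => ⨆ Q ∈ K, ∫ ω', X i ω' ∂Q with hμdef
  have hμrw : ∀ (i : ℕ), (⨆ Q ∈ K, ∫ ω', X i ω' ∂Q) = μ i := fun i => rfl
  simp only [hμrw]
  set a : ℕ → ℝ := fun i => ⨅ ω, X i ω with hadef
  have hB0 : ∀ i ∈ Finset.Icc 1 n, 0 ≤ B i := fun i hi => by
    have := hrange i hi ω₀ ω₀; linarith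
  have hlo : ∀ i ∈ Finset.Icc 1 n, ∀ ω, a i ≤ X i ω := by
    intro i hi ω
    exact ciInf_le ⟨X i ω₀ - B i, Set.forall_mem_range.2 fun ω' => by
      linarith [hrange i hi ω₀ ω']⟩ ω
  have hhi : ∀ i ∈ Finset.Icc 1 n, ∀ ω, X i ω ≤ a i + B i := by
    intro i hi ω
    have : X i ω - B i ≤ a i := le_ciInf fun ω' => by linarith [hrange i hi ω ω']
    linarith
  have hXint : ∀ i ∈ Finset.Icc 1 n, ∀ P ∈ K, Integrable (X i) P := by
    intro i hi P hP
    haveI := hKp P hP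
    exact integrable_of_bounds P (hmeas i) (hlo i hi) (hhi i hi)
  have hint_hi : ∀ i ∈ Finset.Icc 1 n, ∀ P ∈ K, ∫ ω, X i ω ∂P ≤ a i + B i := by
    intro i hi P hP
    haveI := hKp P hP
    have := integral_mono (hXint i hi P hP) (integrable_const (a i + B i)) (hhi i hi)
    simpa using this
  have hμ_ge : ∀ i ∈ Finset.Icc 1 n, ∀ P ∈ K, ∫ ω, X i ω ∂P ≤ μ i := by
    intro i hi P hP
    exact le_real_biSup (fun Q hQ => hint_hi i hi Q hQ) hP
  set t : ℝ := 4 * ε / γ with htdef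
  have ht : 0 < t := by positivity
  set f : ℕ → ℝ → ℝ := fun i x => Real.exp (t * (max (a i) (min x (a i + B i)) - μ i)) with hfdef
  set Cf : ℕ → ℝ := fun i => Real.exp (t * (max (a i) (a i + B i) - μ i)) with hCfdef
  have hf_nonneg : ∀ i x, 0 ≤ f i x := fun i x => (Real.exp_pos _).le
  have hfC : ∀ i x, f i x ≤ Cf i := by
    intro i x
    apply Real.exp_le_exp.2
    apply mul_le_mul_of_nonneg_left _ ht.le
    apply sub_le_sub_right
    exact max_le_max le_rfl (min_le_right _ _)
  have hf_meas : ∀ i, Measurable (f i) := by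
    intro i
    apply Real.measurable_exp.comp
    apply Measurable.const_mul
    apply Measurable.sub_const
    exact (measurable_const.max ((measurable_id.min measurable_const)))
  have hf_eq : ∀ i ∈ Finset.Icc 1 n, ∀ ω, f i (X i ω) = Real.exp (t * (X i ω - μ i)) := by
    intro i hi ω
    simp only [hfdef]
    rw [min_eq_left (hhi i hi ω), max_eq_right (hlo i hi ω)]
  have hprod : ∀ ω, ∏ i ∈ Finset.Icc 1 n, f i (X i ω) =
      Real.exp (t * ∑ i ∈ Finset.Icc 1 n, (X i ω - μ i)) := by
    intro ω
    calc ∏ i ∈ Finset.Icc 1 n, f i (X i ω)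
        = ∏ i ∈ Finset.Icc 1 n, Real.exp (t * (X i ω - μ i)) :=
          Finset.prod_congr rfl fun i hi => hf_eq i hi ω
      _ = Real.exp (∑ i ∈ Finset.Icc 1 n, t * (X i ω - μ i)) := (Real.exp_sum _ _).symm
      _ = Real.exp (t * ∑ i ∈ Finset.Icc 1 n, (X i ω - μ i)) := by rw [Finset.mul_sum]
  -- per-coordinate bound on the sup of expectations
  have hcoord : ∀ i ∈ Finset.Icc 1 n,
      (⨆ P ∈ K, ∫ ω, f i (X i ω) ∂P) ≤ Real.exp (t ^ 2 * (B i) ^ 2 / 8) := by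
    intro i hi
    apply real_biSup_le (Real.exp_pos _).le
    intro Q hQ
    haveI := hKp Q hQ
    have hrw : ∫ ω, f i (X i ω) ∂Q = (∫ ω, Real.exp (t * X i ω) ∂Q) / Real.exp (t * μ i) := by
      rw [← integral_div]
      apply integral_congr_ae
      filter_upwards with ω
      rw [hf_eq i hi ω, mul_sub, Real.exp_sub]
    rw [hrw]
    rw [div_le_iff₀ (Real.exp_pos _)]
    have hH := hoeffding_lem Q (X i) (hmeas i) (a i) (B i) t ht.le (hB0 i hi)
      (hlo i hi) (hhi i hi)
    refine hH.trans ?_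
    rw [← Real.exp_add]
    apply Real.exp_le_exp.2
    have := mul_le_mul_of_nonneg_left (hμ_ge i hi Q hQ) ht.le
    linarith
  -- bound the sup of products
  have hsup_int_nonneg : (0:ℝ) ≤ Real.exp (-(t * ε)) := (Real.exp_pos _).le
  have hmainexp : Real.exp (-(t * ε)) * ∏ i ∈ Finset.Icc 1 n, Real.exp (t ^ 2 * (B i) ^ 2 / 8) =
      Real.exp (-2 * ε ^ 2 / γ) := by
    rw [← Real.exp_sum, ← Real.exp_add]
    congr 1
    have hsum : ∑ i ∈ Finset.Icc 1 n, t ^ 2 * (B i) ^ 2 / 8 = t ^ 2 * γ / 8 := by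
      rw [hγ, Finset.mul_sum, Finset.sum_div]
    rw [hsum, htdef]
    field_simp
    ring
  rw [← hmainexp]
  apply Real.iSup_le _ (by positivity)
  intro P
  apply Real.iSup_le _ (by positivity)
  intro hP
  haveI := hKp P hP
  -- Chernoff for P
  set g : Ω → ℝ := fun ω => Real.exp (t * ∑ i ∈ Finset.Icc 1 n, (X i ω - μ i)) with hgdef
  have hg_meas : Measurable g := by
    apply Real.measurable_exp.comp
    apply Measurable.const_mul
    exact Finset.measurable_sum _ fun i _ => (hmeas i).sub_const _
  have hprod_meas : ∀ Q : Measure Ω, Q ∈ K →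
      Integrable (fun ω => ∏ i ∈ Finset.Icc 1 n, f i (X i ω)) Q := by
    intro Q hQ
    haveI := hKp Q hQ
    apply integrable_of_bounds Q (g := fun ω => ∏ i ∈ Finset.Icc 1 n, f i (X i ω))
      (lo := 0) (hi := ∏ i ∈ Finset.Icc 1 n, Cf i)
    · apply Finset.measurable_prod
      intro i _
      exact (hf_meas i).comp (hmeas i)
    · exact fun ω => Finset.prod_nonneg fun i _ => hf_nonneg i _
    · exact fun ω => Finset.prod_le_prod (fun i _ => hf_nonneg i _) (fun i _ => hfC i _)
  have hg_int : Integrable g P := by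
    have := hprod_meas P hP
    apply this.congr
    filter_upwards with ω
    exact hprod ω
  have hmarkov := mul_meas_ge_le_integral_of_nonneg
    (ae_of_all P fun ω => (Real.exp_pos (t * ∑ i ∈ Finset.Icc 1 n, (X i ω - μ i))).le)
    hg_int (Real.exp (t * ε))
  have hsetEq : {ω | ε ≤ ∑ i ∈ Finset.Icc 1 n, (X i ω - μ i)} =
      {ω | Real.exp (t * ε) ≤ g ω} := by
    ext ω
    simp only [Set.mem_setOf_eq, hgdef, Real.exp_le_exp]
    exact (mul_le_mul_iff_right₀ ht).symm
  calc (P {ω | ε ≤ ∑ i ∈ Finset.Icc 1 n, (X i ω - μ i)}).toReal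
      = Real.exp (-(t * ε)) * (Real.exp (t * ε) *
          (P {ω | Real.exp (t * ε) ≤ g ω}).toReal) := by
        rw [← hsetEq, ← mul_assoc, ← Real.exp_add]
        simp
    _ ≤ Real.exp (-(t * ε)) * ∫ ω, g ω ∂P :=
        mul_le_mul_of_nonneg_left hmarkov hsup_int_nonneg
    _ = Real.exp (-(t * ε)) * ∫ ω, ∏ i ∈ Finset.Icc 1 n, f i (X i ω) ∂P := by
        congr 1
        apply integral_congr_ae
        filter_upwards with ω
        exact (hprod ω).symm
    _ ≤ Real.exp (-(t * ε)) * (⨆ Q ∈ K, ∫ ω, ∏ i ∈ Finset.Icc 1 n, f i (X i ω) ∂Q) := by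
        apply mul_le_mul_of_nonneg_left _ hsup_int_nonneg
        apply le_real_biSup (M := ∏ i ∈ Finset.Icc 1 n, Cf i) _ hP
        intro Q hQ
        haveI := hKp Q hQ
        have := integral_mono (hprod_meas Q hQ) (integrable_const _)
          (fun ω => Finset.prod_le_prod (fun i _ => hf_nonneg i _) (fun i _ => hfC i _))
        simpa using this
    _ ≤ Real.exp (-(t * ε)) * ∏ i ∈ Finset.Icc 1 n, (⨆ Q ∈ K, ∫ ω, f i (X i ω) ∂Q) :=
        mul_le_mul_of_nonneg_left (hfact f hf_nonneg (fun i => ⟨Cf i, hfC i⟩) hf_meas)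
          hsup_int_nonneg
    _ ≤ Real.exp (-(t * ε)) * ∏ i ∈ Finset.Icc 1 n, Real.exp (t ^ 2 * (B i) ^ 2 / 8) := by
        apply mul_le_mul_of_nonneg_left _ hsup_int_nonneg
        apply Finset.prod_le_prod
        · intro i _
          exact Real.iSup_nonneg fun Q => Real.iSup_nonneg fun hQ =>
            integral_nonneg fun ω => hf_nonneg i _
        · exact hcoord
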